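/- Let H be a monoid, A a subset of H containing the identity 1_H, and n an integer greater than 2. Then the equation XA = A^n has at least 2^(|A|-1) solutions X among subsets of H containing 1_H. (If A is infinite, interpret this as: there are infinitely many such solutions.) -/

import Mathlib

open Pointwise

private lemma powerset_encard {α : Type*} {B : Set α} (hB : B.Finite) :
    ({T : Set α | T ⊆ B}).encard = 2 ^ B.ncard := by
  have hfin : ({T : Set α | T ⊆ B}).Finite := hB.finite_subsets
  rw [hfin.encard_eq_coe]
  have : ({T : Set α | T ⊆ B}).ncard = 2 ^ B.ncard := by
    haveI := hB.fintype
    rw [← Nat.card_coe_set_eq, show {T : Set α | T ⊆ B} = 𝒫 B from rfl,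
      Nat.card_congr (Equiv.Set.powerset B),
      Nat.card_eq_fintype_card, Fintype.card_set, ← Nat.card_coe_set_eq,
      Nat.card_eq_fintype_card]
  rw [show ENat.toNat ({T : Set α | T ⊆ B}).encard = ({T : Set α | T ⊆ B}).ncard from rfl, this]
  push_cast
  rfl

private lemma key_sol {H : Type*} [Monoid H] {A : Set H} (hA : (1 : H) ∈ A) {n : ℕ}
    (hn : 2 < n) {S : Set H} (hS1 : (1 : H) ∈ S) (hSA : S ⊆ A) :
    (S ∪ (A ^ (n - 1) \ A)) * A = A ^ n := by
  have hpow : A ^ (n - 1) * A = A ^ n := by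
    rw [← pow_succ]; congr 1; omega
  have h2n : A ^ 2 ⊆ A ^ n := Set.pow_subset_pow_right hA (by omega)
  apply Set.Subset.antisymm
  · rw [Set.union_mul]
    apply Set.union_subset
    · intro w hw
      obtain ⟨x, hx, y, hy, rfl⟩ := hw
      exact h2n (by rw [sq]; exact Set.mul_mem_mul (hSA hx) hy)
    · rw [← hpow]
      exact Set.mul_subset_mul_right Set.diff_subset
  · intro w hw
    rw [← hpow] at hw
    obtain ⟨p, hp, a, ha, rfl⟩ := hw
    by_cases hpA : p ∈ A
    · by_cases hw2 : p * a ∈ A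
      · exact ⟨1, Or.inl hS1, p * a, hw2, one_mul _⟩
      · have hmem : p * a ∈ A ^ (n - 1) := by
          refine Set.pow_subset_pow_right hA (show 2 ≤ n - 1 by omega) ?_
          rw [sq]; exact Set.mul_mem_mul hpA ha
        exact ⟨p * a, Or.inr ⟨hmem, hw2⟩, 1, hA, mul_one _⟩
    · exact ⟨p, Or.inr ⟨hp, hpA⟩, a, ha, rfl⟩

/-- If `1 ∈ A` and `n > 2`, the equation `X * A = A ^ n` has at least
`2 ^ (|A| - 1)` solutions `X` among subsets of `H` containing `1` (infinitely many
solutions if `A` is infinite). -/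
theorem stmt1 {H : Type*} [Monoid H] (A : Set H) (hA : (1 : H) ∈ A) (n : ℕ) (hn : 2 < n) :
    (A.Finite → (2 ^ (A.ncard - 1) : ℕ∞) ≤ {X : Set H | (1 : H) ∈ X ∧ X * A = A ^ n}.encard) ∧
    (A.Infinite → {X : Set H | (1 : H) ∈ X ∧ X * A = A ^ n}.Infinite) := by
  set D : Set H := A ^ (n - 1) \ A with hD
  set f : Set H → Set H := fun S => S ∪ D with hf
  set s : Set (Set H) := {S : Set H | (1 : H) ∈ S ∧ S ⊆ A} with hs
  set Sol : Set (Set H) := {X : Set H | (1 : H) ∈ X ∧ X * A = A ^ n} with hSol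
  -- f maps s into Sol
  have hmaps : ∀ S ∈ s, f S ∈ Sol := by
    rintro S ⟨hS1, hSA⟩
    exact ⟨Or.inl hS1, key_sol hA hn hS1 hSA⟩
  -- f is injective on s
  have hinv : ∀ S ∈ s, f S ∩ A = S := by
    rintro S ⟨hS1, hSA⟩
    ext x
    constructor
    · rintro ⟨hx, hxA⟩
      rcases hx with hx | ⟨-, hx⟩
      · exact hx
      · exact absurd hxA hx
    · intro hx
      exact ⟨Or.inl hx, hSA hx⟩
  have hinj : Set.InjOn f s := by
    intro S hSmem T hTmem h
    rw [← hinv S hSmem, ← hinv T hTmem, h]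
  have himage : f '' s ⊆ Sol := by
    rintro _ ⟨S, hSmem, rfl⟩; exact hmaps S hSmem
  have hle : s.encard ≤ Sol.encard := by
    rw [← hinj.encard_image]
    exact Set.encard_le_encard himage
  constructor
  · intro hfin
    refine le_trans ?_ hle
    -- s = insert 1 '' {T | T ⊆ A \ {1}}
    have h1 : s = (insert (1 : H)) '' {T : Set H | T ⊆ A \ {1}} := by
      ext S
      constructor
      · rintro ⟨hS1, hSA⟩
        refine ⟨S \ {1}, fun x hx => ⟨hSA hx.1, hx.2⟩, ?_⟩
        rw [Set.insert_diff_singleton, Set.insert_eq_self.2 hS1]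
      · rintro ⟨T, hT, rfl⟩
        exact ⟨Set.mem_insert _ _, Set.insert_subset hA (hT.trans Set.diff_subset)⟩
    have hinj2 : Set.InjOn (insert (1 : H)) {T : Set H | T ⊆ A \ {1}} := by
      intro T hT T' hT' h
      have h1T : (1 : H) ∉ T := fun h' => (hT h').2 rfl
      have h1T' : (1 : H) ∉ T' := fun h' => (hT' h').2 rfl
      rw [← Set.insert_diff_self_of_notMem h1T, ← Set.insert_diff_self_of_notMem h1T', h]
    have hcard : s.encard = 2 ^ (A.ncard - 1) := by
      rw [h1, hinj2.encard_image, powerset_encard (hfin.diff (t := {1})),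
        Set.ncard_diff_singleton_of_mem hA]
    rw [hcard]
  · intro hinf
    have hsinf : s.Infinite := by
      have h2 : Set.InjOn (fun a => ({1, a} : Set H)) A := by
        intro a ha b hb h
        have hab : a ∈ ({1, b} : Set H) := by
          rw [show ({1, b} : Set H) = {1, a} from h.symm]; simp
        have hba : b ∈ ({1, a} : Set H) := by
          rw [show ({1, a} : Set H) = {1, b} from h]; simp
        rcases hab with rfl | rfl
        · rcases hba with rfl | rfl <;> rfl
        · rfl
      have : ((fun a => ({1, a} : Set H)) '' A).Infinite := hinf.image h2
      refine this.mono ?_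
      rintro _ ⟨a, ha, rfl⟩
      exact ⟨Set.mem_insert _ _, Set.insert_subset hA (by simpa using ha)⟩
    exact ((hsinf.image hinj).mono himage)
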